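/- Let h : τ → Option τ and let t0 be a task. Suppose n is the least positive integer with walk t0 n = some t0. Then there exist pairwise distinct tasks s_0, s_1, …, s_{n-1} with s_0 = t0 and walk t0 i = some s_i for each i < n, and the finite set {s_0, …, s_{n-1}} is a deadlock cycle. (The tasks reported by the detector upon first return form exactly one deadlock cycle, containing the alarming task; this is the precision claim of the paper's Theorem 5.1 in sharpened form.) -/

import Mathlib

/-- A finite set of tasks is deadlocked if it is nonempty and every task in it
waits (via the waits-for map `h`) on some task also in the set. -/
def Deadlocked {τ : Type*} (h : τ → Option τ) (T : Finset τ) : Prop :=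
  T.Nonempty ∧ ∀ t ∈ T, ∃ t' ∈ T, h t = some t'

/-- A deadlock cycle is a deadlocked set that is minimal: no nonempty strict
subset of it is deadlocked. -/
def DeadlockCycle {τ : Type*} (h : τ → Option τ) (T : Finset τ) : Prop :=
  Deadlocked h T ∧ ∀ S : Finset τ, S ⊂ T → S.Nonempty → ¬ Deadlocked h S

/-- The detector's traversal: `walk h t0 n` follows the waits-for map `h`
for `n` steps starting from `t0`. -/
def walk {τ : Type*} (h : τ → Option τ) (t0 : τ) : ℕ → Option τ
  | 0 => some t0
  | n + 1 => (walk h t0 n).bind h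

/-- If `n` is the least positive integer with `walk h t0 n = some t0`, then the
tasks visited in the first `n` steps are pairwise distinct, start at `t0`,
and form a deadlock cycle. -/
theorem stmt_5 {τ : Type*} [DecidableEq τ] (h : τ → Option τ) (t0 : τ) (n : ℕ)
    (hn : 1 ≤ n) (hret : walk h t0 n = some t0)
    (hleast : ∀ m : ℕ, 1 ≤ m → walk h t0 m = some t0 → n ≤ m) :
    ∃ s : ℕ → τ, (∀ i < n, ∀ j < n, s i = s j → i = j) ∧ s 0 = t0 ∧
      (∀ i < n, walk h t0 i = some (s i)) ∧
      DeadlockCycle h ((Finset.range n).image s) := by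
  have hnone : ∀ i j : ℕ, walk h t0 i = none → walk h t0 (i + j) = none := by
    intro i j hi
    induction j with
    | zero => exact hi
    | succ j ih => show (walk h t0 (i + j)).bind h = none; rw [ih]; rfl
  have hsome : ∀ i ≤ n, (walk h t0 i).isSome := by
    intro i hi
    by_contra hc
    have h0 : walk h t0 i = none := Option.not_isSome_iff_eq_none.mp hc
    have h1 := hnone i (n - i) h0
    rw [Nat.add_sub_cancel' hi, hret] at h1
    exact Option.some_ne_none _ h1
  set s : ℕ → τ := fun i => (walk h t0 i).getD t0 with hs
  have hwalk : ∀ i ≤ n, walk h t0 i = some (s i) := by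
    intro i hi
    rcases Option.isSome_iff_exists.mp (hsome i hi) with ⟨t, ht⟩
    simp [hs, ht]
  have hs0 : s 0 = t0 := rfl
  have htrans : ∀ a b : ℕ, walk h t0 a = walk h t0 b →
      ∀ k, walk h t0 (a + k) = walk h t0 (b + k) := by
    intro a b hab k
    induction k with
    | zero => exact hab
    | succ k ih =>
        show (walk h t0 (a + k)).bind h = (walk h t0 (b + k)).bind h
        rw [ih]
  -- injectivity
  have hinj : ∀ i < n, ∀ j < n, s i = s j → i = j := by
    have key : ∀ i j : ℕ, i < j → j < n → s i ≠ s j := by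
      intro i j hij hjn heq
      have hw : walk h t0 i = walk h t0 j := by
        rw [hwalk i (by omega), hwalk j (le_of_lt hjn), heq]
      have h2 := htrans i j hw (n - j)
      rw [Nat.add_sub_cancel' (le_of_lt hjn), hret] at h2
      have h3 := hleast (i + (n - j)) (by omega) h2
      omega
    intro i hi j hj heq
    by_contra hne
    rcases Nat.lt_or_ge i j with hlt | hge
    · exact key i j hlt hj heq
    · exact key j i (by omega) hi heq.symm
  have hstep : ∀ i < n, h (s i) = some (s ((i + 1) % n)) := by
    intro i hi
    have h1 : walk h t0 (i + 1) = h (s i) := by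
      show (walk h t0 i).bind h = _
      rw [hwalk i (le_of_lt hi)]; rfl
    by_cases hc : i + 1 < n
    · rw [Nat.mod_eq_of_lt hc, ← h1, hwalk (i + 1) (le_of_lt hc)]
    · have hin : i + 1 = n := by omega
      have hm : (i + 1) % n = 0 := by rw [hin]; exact Nat.mod_self n
      rw [hm, hs0, ← h1, hin, hret]
  refine ⟨s, hinj, hs0, fun i hi => hwalk i (le_of_lt hi), ?_, ?_⟩
  · -- Deadlocked
    constructor
    · exact ⟨t0, Finset.mem_image.mpr ⟨0, Finset.mem_range.mpr (by omega), hs0⟩⟩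
    · intro t ht
      rcases Finset.mem_image.mp ht with ⟨i, hi, rfl⟩
      have hi' := Finset.mem_range.mp hi
      refine ⟨s ((i + 1) % n), ?_, hstep i hi'⟩
      exact Finset.mem_image.mpr ⟨(i + 1) % n,
        Finset.mem_range.mpr (Nat.mod_lt _ (by omega)), rfl⟩
  · -- minimality
    intro S hSsub hSne hSd
    rcases hSne with ⟨t, htS⟩
    have htT : t ∈ (Finset.range n).image s := (Finset.ssubset_def.mp hSsub).1 htS
    rcases Finset.mem_image.mp htT with ⟨i, hi, rfl⟩
    have hi' := Finset.mem_range.mp hi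
    have hall : ∀ k : ℕ, s ((i + k) % n) ∈ S := by
      intro k
      induction k with
      | zero =>
          simpa [Nat.mod_eq_of_lt hi'] using htS
      | succ k ih =>
          rcases hSd.2 _ ih with ⟨t', ht'S, ht'⟩
          have hlt : (i + k) % n < n := Nat.mod_lt _ (by omega)
          rw [hstep _ hlt] at ht'
          have ht'' : t' = s (((i + k) % n + 1) % n) := (Option.some.inj ht').symm
          have hmod : ((i + k) % n + 1) % n = (i + (k + 1)) % n := by
            rw [Nat.mod_add_mod]; ring_nf
          rw [ht'', hmod] at ht'S
          exact ht'S
    have hTS : (Finset.range n).image s ⊆ S := by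
      intro x hx
      rcases Finset.mem_image.mp hx with ⟨j, hj, rfl⟩
      have hj' := Finset.mem_range.mp hj
      have := hall (n - i + j)
      have heq : (i + (n - i + j)) % n = j := by
        have : i + (n - i + j) = n + j := by omega
        rw [this, Nat.add_mod_left, Nat.mod_eq_of_lt hj']
      rwa [heq] at this
    exact (Finset.ssubset_def.mp hSsub).2 hTS
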